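/- arXiv:2312.13525 — 2 statements merged into one kernel-verified Lean document; each statement's English description precedes it below -/
import Mathlib

section
/- For every z ∈ M, positive integer k, and integer n ≥ 1, the identity n · s_{z^n,k} s_{z^{n−1},k} ⋯ s_{z,k} = Σ_{i=1}^{n} s_{z^i, ik} ∗ (s_{z^{n−i},k} ⋯ s_{z,k}) holds in the harmonic algebra 𝔥_{M,∗}, where on the left the factors are multiplied by concatenation and ∗ denotes the harmonic product. -/
open scoped BigOperators

/-- `𝔥_M`: the noncommutative polynomial ring `ℚ⟨e_z : z ∈ M⟩`, realized as the
monoid algebra of the free monoid on `M` over `ℚ` (concatenation product). -/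
abbrev H (M : Type*) [MonoidWithZero M] : Type _ := MonoidAlgebra ℚ (FreeMonoid M)

variable {M : Type*} [MonoidWithZero M]

/-- The word `e_{a_1} ⋯ e_{a_k}` as an element of `𝔥_M`. -/
noncomputable def wrd (l : List M) : H M := MonoidAlgebra.single (FreeMonoid.ofList l) 1

/-- The generator `e_z`. -/
noncomputable def e (z : M) : H M := wrd [z]

/-- The harmonic product on words, defined by the recursion
`e_a w ∗ e_b w' = e_{ab}(w ∗ e_b w' + e_a w ∗ w' − e_0 (w ∗ w'))`. -/
noncomputable def har : List M → List M → H M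
  | [], w => wrd w
  | a :: w, [] => wrd (a :: w)
  | a :: w, b :: w' =>
      wrd [a * b] * (har w (b :: w') + har (a :: w) w' - wrd [0] * har w w')
termination_by w w' => w.length + w'.length
decreasing_by all_goals (simp; try omega)

/-- The harmonic product `∗` on `𝔥_M`, extended ℚ-bilinearly from words. -/
noncomputable def hmul (f g : H M) : H M :=
  Finsupp.sum f.coeff fun w a => Finsupp.sum g.coeff fun w' b =>
    (a * b) • har (FreeMonoid.toList w) (FreeMonoid.toList w')

/-- Powers with respect to the harmonic product. -/
noncomputable def hpow (a : H M) : ℕ → H M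
  | 0 => 1
  | n + 1 => hmul a (hpow a n)

/-- `s_{z,k} = e_z e_0^{k-1}` (concatenation product). -/
noncomputable def s (z : M) (k : ℕ) : H M := e z * (e 0) ^ (k - 1)

/-- `sprod z k n = s_{z^n,k} s_{z^{n-1},k} ⋯ s_{z,k}` (concatenation), `sprod z k 0 = 1`. -/
noncomputable def sprod (z : M) (k : ℕ) : ℕ → H M
  | 0 => 1
  | n + 1 => s (z ^ (n + 1)) k * sprod z k n

/-- Cauchy product of power series over `(𝔥_M, ∗)`, represented as coefficient sequences. -/
noncomputable def hmulPS (f g : ℕ → H M) : ℕ → H M :=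
  fun n => ∑ i ∈ Finset.range (n + 1), hmul (f i) (g (n - i))

/-- Powers of a power series w.r.t. the harmonic product. -/
noncomputable def psPow (f : ℕ → H M) : ℕ → (ℕ → H M)
  | 0 => fun n => if n = 0 then 1 else 0
  | m + 1 => hmulPS f (psPow f m)

/-- `exp_∗` of a power series with zero constant term (coefficientwise). -/
noncomputable def expPS (f : ℕ → H M) : ℕ → H M :=
  fun n => ∑ m ∈ Finset.range (n + 1), ((Nat.factorial m : ℚ))⁻¹ • psPow f m n

/-- Coefficients of the formal sine `S_z(x) = Σ_{n≥0} s_{z^n,2}⋯s_{z,2} x^{2n+1}`. -/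
noncomputable def Scoef (z : M) (d : ℕ) : H M :=
  if d % 2 = 1 then sprod z 2 (d / 2) else 0

/-- Coefficients of the formal cosine `C_z(x) = S_z'(x)`. -/
noncomputable def Ccoef (z : M) (d : ℕ) : H M := ((d : ℚ) + 1) • Scoef z (d + 1)

/-- `w_{z,n} = (2n+1)! s_{z^n,2} ⋯ s_{z,2}`. -/
noncomputable def wz (z : M) (n : ℕ) : H M := ((Nat.factorial (2 * n + 1) : ℚ)) • sprod z 2 n

/-- `g_{z,m,n} = w_{z,m+n} − w_{z,m} ∗ w_{z,n}`. -/
noncomputable def gz (z : M) (m n : ℕ) : H M := wz z (m + n) - hmul (wz z m) (wz z n)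

/-- Coefficient of `x^i y^j` in `A_z(x,y) = S_z(x+y) − S_z(x) ∗ C_z(y) − C_z(x) ∗ S_z(y)`. -/
noncomputable def Acoef (z : M) (i j : ℕ) : H M :=
  (Nat.choose (i + j) i : ℚ) • Scoef z (i + j)
    - hmul (Scoef z i) (Ccoef z j) - hmul (Ccoef z i) (Scoef z j)

/-- Coefficient of `x^d` in `P_z(x) = −w_{z,1} ∗ S_z(x)^{∗2} + C_z(x)^{∗2}`. -/
noncomputable def Pcoef (z : M) (d : ℕ) : H M :=
  -(hmul (wz z 1) (hmulPS (Scoef z) (Scoef z) d)) + hmulPS (Ccoef z) (Ccoef z) d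


/-- Coefficients of `S^T_{z,k}(x) = Σ_{n≥0} s_{z^n,k}⋯s_{z,k} x^{(n+1)k−1}`. -/
noncomputable def STcoef (z : M) (k : ℕ) (d : ℕ) : H M :=
  if k ∣ (d + 1) then sprod z k ((d + 1) / k - 1) else 0

/-- Coefficients of the series `Σ_{n≥1} (s_{z^n,nk}/n) x^{nk}`. -/
noncomputable def gexp (z : M) (k : ℕ) (d : ℕ) : H M :=
  if d ≠ 0 ∧ k ∣ d then (((d / k : ℕ) : ℚ))⁻¹ • s (z ^ (d / k)) d else 0

/-- Coefficients of `S^R_{z,k}(x) = x^{k−1} exp_∗(Σ_{n≥1} (s_{z^n,nk}/n) x^{nk})`. -/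
noncomputable def SRcoef (z : M) (k : ℕ) (d : ℕ) : H M :=
  if k - 1 ≤ d then expPS (gexp z k) (d - (k - 1)) else 0

/-- Admissible words spanning `𝔥^0_M = ℚ ⊕ ⨁_{a≠0,1} 𝔥_M e_a ⊕ ⨁_{a≠0,b≠1} e_a 𝔥_M e_b`. -/
def adm0 (l : List M) : Prop :=
  l = [] ∨ ∃ h : l ≠ [],
    (l.getLast h ≠ 0 ∧ l.getLast h ≠ 1) ∨ (l.head h ≠ 0 ∧ l.getLast h ≠ 1)

/-- The subspace `𝔥^0_M`. -/
noncomputable def H0 (M : Type*) [MonoidWithZero M] : Submodule ℚ (H M) :=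
  Submodule.span ℚ {x | ∃ l : List M, adm0 l ∧ x = wrd l}

/-- Words spanning `𝔥^1_M = ⨁_{m≥0} 𝔥^0_M e_1^m`. -/
def adm1 (l : List M) : Prop :=
  ∃ (l₀ : List M) (m : ℕ), adm0 l₀ ∧ l = l₀ ++ List.replicate m 1

/-- The subspace `𝔥^1_M`. -/
noncomputable def H1 (M : Type*) [MonoidWithZero M] : Submodule ℚ (H M) :=
  Submodule.span ℚ {x | ∃ l : List M, adm1 l ∧ x = wrd l}

/-- `ℓ(w)`: the number of letters `e_a` of a word with `a ≠ 0`. -/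
noncomputable def lcount (l : List M) : ℕ :=
  l.countP fun a => @decide (a ≠ 0) (Classical.propDecidable _)

/-- `ℱ_d 𝔥^0_M`: span of admissible words `w` with `ℓ(w) ≤ d`. -/
noncomputable def F0 (M : Type*) [MonoidWithZero M] (d : ℕ) : Submodule ℚ (H M) :=
  Submodule.span ℚ {x | ∃ l : List M, adm0 l ∧ lcount l ≤ d ∧ x = wrd l}

/-- The ideal of `(𝔥_M, ∗)` generated by a set. -/
noncomputable def genIdeal (S : Set (H M)) : Submodule ℚ (H M) :=
  Submodule.span ℚ {x | ∃ a y, y ∈ S ∧ x = hmul a y}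

/-- The product on the polynomial ring `𝔥_{M,∗}[S,T]` (represented as
finitely supported coefficient families indexed by monomials `S^i T^j`). -/
noncomputable def polyMul2 (f g : (ℕ × ℕ) →₀ H M) : (ℕ × ℕ) →₀ H M :=
  Finsupp.sum f fun p a => Finsupp.sum g fun q b => Finsupp.single (p + q) (hmul a b)

/-- `φ : 𝔥^0_{M,∗}[S,T] → 𝔥_{M,∗}`, `Σ w_{ij} S^i T^j ↦ Σ w_{ij} ∗ e_0^{∗i} ∗ e_1^{∗j}`. -/
noncomputable def phi2 (f : (ℕ × ℕ) →₀ H M) : H M :=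
  Finsupp.sum f fun p a => hmul a (hmul (hpow (e 0) p.1) (hpow (e 1) p.2))

/-- The product on `𝔥_{M,∗}[S]`. -/
noncomputable def polyMul1 (f g : ℕ →₀ H M) : ℕ →₀ H M :=
  Finsupp.sum f fun p a => Finsupp.sum g fun q b => Finsupp.single (p + q) (hmul a b)

/-- `φ₁ : 𝔥^1_{M,∗}[S] → 𝔥_{M,∗}`, `Σ w_i S^i ↦ Σ w_i ∗ e_0^{∗i}`. -/
noncomputable def phi1 (f : ℕ →₀ H M) : H M :=
  Finsupp.sum f fun i a => hmul a (hpow (e 0) i)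


-- ============ auxiliary development ============

lemma wrd_mul (u w : List M) : wrd u * wrd w = wrd (u ++ w) := by
  simp [wrd, MonoidAlgebra.single_mul_single, FreeMonoid.ofList_append]

lemma wrd_nil : (wrd ([] : List M)) = 1 := rfl

lemma har_nil_left (w : List M) : har [] w = wrd w := by rw [har]

lemma har_nil_right (u : List M) : har u [] = wrd u := by
  cases u <;> rw [har]

lemma har_cons_cons (a b : M) (w w' : List M) :
    har (a :: w) (b :: w') =
      wrd [a * b] * (har w (b :: w') + har (a :: w) w' - wrd [0] * har w w') := by
  rw [har]

lemma har_zero_left (u w : List M) : har (0 :: u) w = wrd [0] * har u w := by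
  induction w with
  | nil => rw [har_nil_right, har_nil_right, wrd_mul]; rfl
  | cons b w' ih =>
      rw [har_cons_cons, ih, zero_mul, add_sub_cancel_right]

lemma har_zero_right (u w : List M) : har u (0 :: w) = wrd [0] * har u w := by
  induction u with
  | nil => rw [har_nil_left, har_nil_left, wrd_mul]; rfl
  | cons a u' ih =>
      rw [har_cons_cons, ih, mul_zero, add_sub_cancel_left]

lemma har_rep_left (p : ℕ) (w : List M) :
    har (List.replicate p 0) w = wrd (List.replicate p 0) * wrd w := by
  induction p with
  | zero => simp [har_nil_left, wrd_nil]
  | succ q ih =>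
      rw [List.replicate_succ, har_zero_left, ih, ← mul_assoc, wrd_mul]
      rfl

lemma har_rep_right (u : List M) (q : ℕ) (w : List M) :
    har u (List.replicate q 0 ++ w) = wrd (List.replicate q 0) * har u w := by
  induction q with
  | zero => simp [wrd_nil]
  | succ r ih =>
      rw [List.replicate_succ, List.cons_append, har_zero_right, ih, ← mul_assoc, wrd_mul]
      rfl

lemma wrd_rep_add (a b : ℕ) :
    wrd (List.replicate a (0 : M)) * wrd (List.replicate b 0)
      = wrd (List.replicate (a + b) 0) := by
  rw [wrd_mul, List.replicate_add]

noncomputable def Wlist (z : M) (l : ℕ) : ℕ → List M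
  | 0 => []
  | m + 1 => z ^ (m + 1) :: (List.replicate l 0 ++ Wlist z l m)

noncomputable def AA (z : M) (l j : ℕ) : ℕ → H M
  | 0 => wrd (z ^ (j + 1) :: List.replicate (l + j * (l + 1)) 0)
  | m + 1 => wrd [z ^ (j + m + 2)] *
      (wrd (List.replicate l 0) * AA z l j m
        + wrd (List.replicate (l + j * (l + 1)) 0) * wrd (Wlist z l (m + 1)))

noncomputable def BB (z : M) (l j : ℕ) : ℕ → H M
  | 0 => 0
  | m + 1 => AA z l (j + 1) m

lemma e0_pow (q : ℕ) : (e (0 : M)) ^ q = wrd (List.replicate q 0) := by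
  induction q with
  | zero => simp [wrd_nil]
  | succ r ih =>
      rw [pow_succ, ih, e, wrd_mul, ← List.replicate_succ']

lemma s_eq (a : M) (K : ℕ) : s a (K + 1) = wrd (a :: List.replicate K 0) := by
  rw [s, Nat.add_sub_cancel, e0_pow, e, wrd_mul]
  rfl

lemma sprod_eq_wrd (z : M) (l : ℕ) : ∀ m, sprod z (l + 1) m = wrd (Wlist z l m)
  | 0 => by simp [sprod, Wlist, wrd_nil]
  | m + 1 => by
      rw [sprod, sprod_eq_wrd z l m, s_eq, wrd_mul, Wlist]
      rfl

lemma har_block (x : M) (p : ℕ) (z : M) (l m : ℕ) :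
    har (x :: List.replicate p 0) (Wlist z l (m + 1)) =
      wrd [x * z ^ (m + 1)] *
        (wrd (List.replicate p 0) * wrd (Wlist z l (m + 1))
          + wrd (List.replicate l 0) * har (x :: List.replicate p 0) (Wlist z l m)
          - wrd (List.replicate (p + l + 1) 0) * wrd (Wlist z l m)) := by
  show har (x :: List.replicate p 0) (z ^ (m + 1) :: (List.replicate l 0 ++ Wlist z l m)) =
      wrd [x * z ^ (m + 1)] *
        (wrd (List.replicate p 0) * wrd (z ^ (m + 1) :: (List.replicate l 0 ++ Wlist z l m))
          + wrd (List.replicate l 0) * har (x :: List.replicate p 0) (Wlist z l m)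
          - wrd (List.replicate (p + l + 1) 0) * wrd (Wlist z l m))
  rw [har_cons_cons, har_rep_left, har_rep_right, har_rep_left]
  congr 1
  congr 1
  rw [← wrd_mul (List.replicate l 0) (Wlist z l m), ← mul_assoc, ← mul_assoc]
  congr 1
  have : wrd [(0 : M)] = wrd (List.replicate 1 0) := rfl
  rw [this, wrd_rep_add, wrd_rep_add]
  congr 2
  omega

lemma negpart (z : M) (l j : ℕ) : ∀ m,
    AA z l (j + 1) m = wrd [z ^ (j + m + 2)] *
      (wrd (List.replicate l 0) * BB z l j m
        + wrd (List.replicate (l + j * (l + 1) + l + 1) 0) * wrd (Wlist z l m))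
  | 0 => by
      rw [AA, BB, Wlist]
      rw [mul_zero, zero_add, wrd_nil, mul_one, wrd_mul]
      have h1 : j + 0 + 2 = (j + 1) + 1 := by omega
      have h2 : l + j * (l + 1) + l + 1 = l + (j + 1) * (l + 1) := by ring
      rw [h1, h2]
      rfl
  | m + 1 => by
      rw [AA, BB]
      have h1 : (j + 1) + m + 2 = j + (m + 1) + 2 := by omega
      have h2 : l + (j + 1) * (l + 1) = l + j * (l + 1) + l + 1 := by ring
      rw [h1, h2]

lemma core (z : M) (l j : ℕ) : ∀ m,
    har (z ^ (j + 1) :: List.replicate (l + j * (l + 1)) 0) (Wlist z l m)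
      = AA z l j m - BB z l j m
  | 0 => by rw [Wlist, har_nil_right, AA, BB, sub_zero]
  | m + 1 => by
      rw [har_block, core z l j m]
      have hz : wrd [z ^ (j + 1) * z ^ (m + 1)] = wrd [z ^ (j + m + 2)] := by
        rw [← pow_add, show j + 1 + (m + 1) = j + m + 2 from by omega]
      rw [hz, AA, BB, negpart z l j m]
      set X := wrd [z ^ (j + m + 2)]
      set P := wrd (List.replicate (l + j * (l + 1)) 0) * wrd (Wlist z l (m + 1))
      set Rl := wrd (List.replicate l (0 : M))
      set A := AA z l j m
      set B := BB z l j m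
      set Q := wrd (List.replicate (l + j * (l + 1) + l + 1) 0) * wrd (Wlist z l m)
      rw [mul_sub Rl, ← mul_sub X]
      congr 1
      abel

lemma hmul_wrd (u w : List M) : hmul (wrd u) (wrd w) = har u w := by
  rw [hmul, wrd, wrd, MonoidAlgebra.coeff_single, MonoidAlgebra.coeff_single]
  rw [Finsupp.sum_single_index]
  · rw [Finsupp.sum_single_index]
    · simp [FreeMonoid.toList_ofList]
    · simp
  · simp [Finsupp.sum]

lemma AA_zero (z : M) (l : ℕ) : ∀ m, AA z l 0 m = ((m : ℚ) + 1) • sprod z (l + 1) (m + 1)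
  | 0 => by
      rw [AA]
      simp only [Nat.cast_zero, zero_add, zero_mul, Nat.add_zero, one_smul]
      rw [sprod, sprod, mul_one, pow_one, s_eq]
  | m + 1 => by
      rw [AA, AA_zero z l m, ← sprod_eq_wrd]
      simp only [Nat.zero_add, zero_mul, Nat.add_zero]
      rw [← mul_add (wrd (List.replicate l 0))]
      have hc : ((m : ℚ) + 1) • sprod z (l + 1) (m + 1) + sprod z (l + 1) (m + 1)
          = ((m : ℚ) + 2) • sprod z (l + 1) (m + 1) := by module
      rw [hc, mul_smul_comm, mul_smul_comm]
      have hs : sprod z (l + 1) (m + 2) = s (z ^ (m + 2)) (l + 1) * sprod z (l + 1) (m + 1) :=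
        rfl
      rw [hs, s_eq]
      have hq : ((m + 1 : ℕ) : ℚ) + 1 = (m : ℚ) + 2 := by push_cast; ring
      rw [hq]
      congr 1
      rw [← mul_assoc, wrd_mul]
      rfl


/-- `n · s_{z^n,k}⋯s_{z,k} = Σ_{i=1}^n s_{z^i,ik} ∗ (s_{z^{n−i},k}⋯s_{z,k})`. -/
theorem key_identity (M : Type*) [MonoidWithZero M] (z : M) (k n : ℕ)
    (hk : 1 ≤ k) (hn : 1 ≤ n) :
    (n : ℚ) • sprod z k n =
      ∑ i ∈ Finset.Icc 1 n, hmul (s (z ^ i) (i * k)) (sprod z k (n - i)) := by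
  obtain ⟨l, rfl⟩ : ∃ l, k = l + 1 := ⟨k - 1, by omega⟩
  obtain ⟨nn, rfl⟩ : ∃ nn, n = nn + 1 := ⟨n - 1, by omega⟩
  set GG : ℕ → H M := fun j => if j < nn + 1 then AA z l j (nn - j) else 0 with hGG
  have hsummand : ∀ j < nn + 1,
      hmul (s (z ^ (j + 1)) ((j + 1) * (l + 1))) (sprod z (l + 1) (nn + 1 - (j + 1)))
        = GG j - GG (j + 1) := by
    intro j hj
    rw [show (j + 1) * (l + 1) = (l + j * (l + 1)) + 1 from by ring, s_eq,
      sprod_eq_wrd, hmul_wrd, show nn + 1 - (j + 1) = nn - j from by omega, core]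
    congr 1
    · simp only [hGG]
      rw [if_pos hj]
    · rcases Nat.lt_or_ge j nn with h | h
      · rw [show nn - j = (nn - (j + 1)) + 1 from by omega, BB]
        simp only [hGG]
        rw [if_pos (by omega : j + 1 < nn + 1)]
      · rw [show nn - j = 0 from by omega, BB]
        simp only [hGG]
        rw [if_neg (by omega : ¬ (j + 1 < nn + 1))]
  rw [← Finset.Ico_add_one_right_eq_Icc, Finset.sum_Ico_eq_sum_range]
  simp only [Nat.add_sub_cancel]
  have hstep : ∑ j ∈ Finset.range (nn + 1),
      hmul (s (z ^ (1 + j)) ((1 + j) * (l + 1))) (sprod z (l + 1) (nn + 1 - (1 + j)))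
      = GG 0 - GG (nn + 1) := by
    rw [← Finset.sum_range_sub' GG (nn + 1)]
    apply Finset.sum_congr rfl
    intro j hj
    rw [show 1 + j = j + 1 from by omega]
    exact hsummand j (Finset.mem_range.mp hj)
  rw [hstep]
  simp only [hGG]
  rw [if_pos (by omega : 0 < nn + 1), if_neg (by omega : ¬ (nn + 1 < nn + 1))]
  rw [Nat.sub_zero, sub_zero]
  rw [AA_zero]
  push_cast
  ring_nf
end

section
/- Let z ∈ M and I an ideal of 𝔥_{M,∗}. Then I contains the ideal AP_z (i.e., I is AP_z-ample) if and only if the modified addition formula S_z(x+y) = S_z(x) ∗ C_z(y) + C_z(x) ∗ S_z(y) holds in (𝔥_{M,∗}/I)⟦x,y⟧. -/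
open scoped BigOperators

variable {M : Type*} [MonoidWithZero M]

section Aux

variable {M : Type*} [MonoidWithZero M]

lemma hmul_zero_left (g : H M) : hmul (0 : H M) g = 0 := by
  simp [hmul]

lemma hmul_zero_right (f : H M) : hmul f (0 : H M) = 0 := by
  simp [hmul]

lemma hmul_smul_left (c : ℚ) (f g : H M) : hmul (c • f) g = c • hmul f g := by
  unfold hmul
  rw [MonoidAlgebra.coeff_smul, Finsupp.smul_sum, Finsupp.sum_smul_index']
  · refine Finsupp.sum_congr fun w _ => ?_
    rw [Finsupp.smul_sum]
    refine Finsupp.sum_congr fun w' _ => ?_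
    rw [smul_smul, smul_eq_mul, mul_assoc]
  · intro w; simp

lemma hmul_smul_right (c : ℚ) (f g : H M) : hmul f (c • g) = c • hmul f g := by
  unfold hmul
  rw [Finsupp.smul_sum]
  refine Finsupp.sum_congr fun w a => ?_
  rw [MonoidAlgebra.coeff_smul, Finsupp.smul_sum, Finsupp.sum_smul_index']
  · refine Finsupp.sum_congr fun w' _ => ?_
    rw [smul_smul, smul_eq_mul, mul_left_comm]
  · intro w'; simp

lemma hmul_one_left (g : H M) : hmul (1 : H M) g = g := by
  have h1 : (1 : H M).coeff = Finsupp.single (1 : FreeMonoid M) (1 : ℚ) := rfl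
  unfold hmul
  rw [h1, Finsupp.sum_single_index (by simp)]
  have : ∀ w' : FreeMonoid M, ∀ b : ℚ,
      ((1 : ℚ) * b) • har (FreeMonoid.toList (1 : FreeMonoid M)) (FreeMonoid.toList w')
        = MonoidAlgebra.single w' b := by
    intro w' b
    have ht : FreeMonoid.toList (1 : FreeMonoid M) = ([] : List M) := rfl
    rw [ht, har, one_mul]
    show b • (MonoidAlgebra.single (FreeMonoid.ofList (FreeMonoid.toList w')) (1:ℚ)) = _
    rw [FreeMonoid.ofList_toList, MonoidAlgebra.smul_single, smul_eq_mul, mul_one]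
  calc Finsupp.sum g.coeff (fun w' b => ((1:ℚ) * b) • har (FreeMonoid.toList 1) (FreeMonoid.toList w'))
      = Finsupp.sum g.coeff (fun w' b => MonoidAlgebra.single w' b) := by
        exact Finsupp.sum_congr fun w' _ => this w' _
    _ = g := MonoidAlgebra.sum_coeff_single g

lemma Scoef_even (z : M) (m : ℕ) : Scoef z (2 * m) = 0 := by
  simp [Scoef, Nat.mul_mod_right]

lemma Scoef_odd (z : M) (n : ℕ) : Scoef z (2 * n + 1) = sprod z 2 n := by
  have h1 : (2 * n + 1) % 2 = 1 := by omega
  have h2 : (2 * n + 1) / 2 = n := by omega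
  simp [Scoef, h1, h2]

lemma Ccoef_even (z : M) (m : ℕ) :
    Ccoef z (2 * m) = ((2 * m + 1 : ℕ) : ℚ) • sprod z 2 m := by
  rw [Ccoef, Scoef_odd]
  push_cast
  ring_nf

lemma Ccoef_odd (z : M) (m : ℕ) : Ccoef z (2 * m + 1) = 0 := by
  have : (2 * m + 1) + 1 = 2 * (m + 1) := by ring
  rw [Ccoef, this, Scoef_even, smul_zero]

/-- Key natural-number identity. -/
lemma key_nat (m n : ℕ) :
    (2 * (m + n) + 1).choose (2 * m) * (2 * m).factorial * (2 * n + 1).factorial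
      = (2 * (m + n) + 1).factorial := by
  have h := Nat.choose_mul_factorial_mul_factorial
    (show 2 * m ≤ 2 * (m + n) + 1 by omega)
  have h1 : 2 * (m + n) + 1 - 2 * m = 2 * n + 1 := by omega
  rw [h1] at h
  exact h

lemma key_nat' (m n : ℕ) :
    (2 * (m + n) + 1).choose (2 * m + 1) * (2 * m + 1).factorial * (2 * n).factorial
      = (2 * (m + n) + 1).factorial := by
  have h := Nat.choose_mul_factorial_mul_factorial
    (show 2 * m + 1 ≤ 2 * (m + n) + 1 by omega)
  have h1 : 2 * (m + n) + 1 - (2 * m + 1) = 2 * n := by omega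
  rw [h1] at h
  exact h

lemma gz_eq (z : M) (m n : ℕ) :
    gz z m n = ((2 * (m + n) + 1).factorial : ℚ) • sprod z 2 (m + n)
      - (((2 * m + 1).factorial * (2 * n + 1).factorial : ℕ) : ℚ) •
          hmul (sprod z 2 m) (sprod z 2 n) := by
  rw [gz, wz, wz, wz, hmul_smul_left, hmul_smul_right, smul_smul]
  push_cast
  ring_nf

lemma Acoef_even_odd (z : M) (m n : ℕ) :
    Acoef z (2 * m) (2 * n + 1)
      = (((2 * m).factorial * (2 * n + 1).factorial : ℕ) : ℚ)⁻¹ • gz z m n := by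
  have hij : 2 * m + (2 * n + 1) = 2 * (m + n) + 1 := by ring
  rw [Acoef, hij, Scoef_odd, Scoef_even, Ccoef_odd, Ccoef_even, Scoef_odd,
    hmul_zero_left, hmul_smul_left, gz_eq, smul_sub, smul_smul, smul_smul]
  have hc0 : (((2 * m).factorial * (2 * n + 1).factorial : ℕ) : ℚ) ≠ 0 := by
    positivity
  have e1 : ((((2 * m).factorial * (2 * n + 1).factorial : ℕ) : ℚ))⁻¹
      * ((2 * (m + n) + 1).factorial : ℚ)
      = (((2 * (m + n) + 1).choose (2 * m) : ℕ) : ℚ) := by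
    rw [inv_mul_eq_iff_eq_mul₀ hc0]
    norm_cast
    rw [← key_nat m n]
    ring
  have e2 : ((((2 * m).factorial * (2 * n + 1).factorial : ℕ) : ℚ))⁻¹
      * (((2 * m + 1).factorial * (2 * n + 1).factorial : ℕ) : ℚ)
      = ((2 * m + 1 : ℕ) : ℚ) := by
    rw [inv_mul_eq_iff_eq_mul₀ hc0]
    norm_cast
    rw [Nat.factorial_succ]
    ring
  rw [e1, e2, sub_zero]

lemma Acoef_odd_even (z : M) (m n : ℕ) :
    Acoef z (2 * m + 1) (2 * n)
      = (((2 * m + 1).factorial * (2 * n).factorial : ℕ) : ℚ)⁻¹ • gz z m n := by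
  have hij : 2 * m + 1 + 2 * n = 2 * (m + n) + 1 := by ring
  rw [Acoef, hij, Scoef_odd, Scoef_odd, Ccoef_odd, Ccoef_even,
    hmul_zero_left, hmul_smul_right, gz_eq, smul_sub, smul_smul, smul_smul]
  have hc0 : (((2 * m + 1).factorial * (2 * n).factorial : ℕ) : ℚ) ≠ 0 := by
    positivity
  have e1 : ((((2 * m + 1).factorial * (2 * n).factorial : ℕ) : ℚ))⁻¹
      * ((2 * (m + n) + 1).factorial : ℚ)
      = (((2 * (m + n) + 1).choose (2 * m + 1) : ℕ) : ℚ) := by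
    rw [inv_mul_eq_iff_eq_mul₀ hc0]
    norm_cast
    rw [← key_nat' m n]
    ring
  have e2 : ((((2 * m + 1).factorial * (2 * n).factorial : ℕ) : ℚ))⁻¹
      * (((2 * m + 1).factorial * (2 * n + 1).factorial : ℕ) : ℚ)
      = ((2 * n + 1 : ℕ) : ℚ) := by
    rw [inv_mul_eq_iff_eq_mul₀ hc0]
    norm_cast
    rw [Nat.factorial_succ (2 * n)]
    ring
  rw [e1, e2, sub_zero]

lemma Acoef_even_even (z : M) (m n : ℕ) : Acoef z (2 * m) (2 * n) = 0 := by
  have hij : 2 * m + 2 * n = 2 * (m + n) := by ring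
  rw [Acoef, hij, Scoef_even, Scoef_even z m]
  have hsn : Scoef z (2 * n) = 0 := Scoef_even z n
  rw [hsn, hmul_zero_left, hmul_zero_right, smul_zero]
  simp

lemma Acoef_odd_odd (z : M) (m n : ℕ) : Acoef z (2 * m + 1) (2 * n + 1) = 0 := by
  have hij : 2 * m + 1 + (2 * n + 1) = 2 * (m + n + 1) := by ring
  rw [Acoef, hij, Scoef_even, Ccoef_odd, Ccoef_odd,
    hmul_zero_left, hmul_zero_right, smul_zero]
  simp

lemma gz_eq_smul_Acoef (z : M) (m n : ℕ) :
    gz z m n = (((2 * m).factorial * (2 * n + 1).factorial : ℕ) : ℚ) •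
      Acoef z (2 * m) (2 * n + 1) := by
  rw [Acoef_even_odd, smul_smul, mul_inv_cancel₀, one_smul]
  positivity

end Aux

/-- Theorem 3.1: an ideal `I` of `𝔥_{M,∗}` is `AP_z`-ample iff the modified addition
formula `S_z(x+y) = S_z(x) ∗ C_z(y) + C_z(x) ∗ S_z(y)` holds in `(𝔥_{M,∗}/I)⟦x,y⟧`
(i.e. all coefficients of `A_z(x,y)` lie in `I`). -/
theorem addition_formula_iff_ample (M : Type*) [MonoidWithZero M] (z : M)
    (I : Submodule ℚ (H M)) (hI : ∀ a b : H M, b ∈ I → hmul a b ∈ I) :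
    genIdeal {x : H M | ∃ m n : ℕ, x = gz z m n} ≤ I ↔
      ∀ i j : ℕ, Acoef z i j ∈ I := by
  constructor
  · intro hle i j
    have hgz : ∀ m n : ℕ, gz z m n ∈ I := by
      intro m n
      apply hle
      apply Submodule.subset_span
      exact ⟨1, gz z m n, ⟨m, n, rfl⟩, (hmul_one_left _).symm⟩
    rcases Nat.even_or_odd i with ⟨m, hm⟩ | ⟨m, hm⟩ <;>
      rcases Nat.even_or_odd j with ⟨n, hn⟩ | ⟨n, hn⟩
    · rw [show i = 2 * m by omega, show j = 2 * n by omega, Acoef_even_even]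
      exact I.zero_mem
    · rw [show i = 2 * m by omega, hn, Acoef_even_odd]
      exact I.smul_mem _ (hgz m n)
    · rw [hm, show j = 2 * n by omega, Acoef_odd_even]
      exact I.smul_mem _ (hgz m n)
    · rw [hm, hn, Acoef_odd_odd]
      exact I.zero_mem
  · intro hA
    rw [genIdeal, Submodule.span_le]
    rintro x ⟨a, y, ⟨m, n, rfl⟩, rfl⟩
    apply hI
    rw [gz_eq_smul_Acoef]
    exact I.smul_mem _ (hA _ _)
end
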